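/- arXiv:1104.4297 — 2 statements merged into one kernel-verified Lean document; each statement's English description precedes it below -/
import Mathlib

section
/- Let m, s be integers with s ≥ 1 and m ≥ 2s−1. Let γ = (γ_1,…,γ_e) be an e-tuple of formal power series in K⟦t⟧ such that: ord(γ_j) ≥ s for all j = 1,…,e; ord(γ_1) = s; and E_{1,j}(γ) ≡ 0 mod t^{m+1} for all 3 ≤ j ≤ e. Then E_{jh}(γ) ≡ 0 mod t^{m+1} for all pairs 2 ≤ j < h−1 ≤ e−1, and hence for all pairs 1 ≤ j < h−1 ≤ e−1. -/
open MvPolynomial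

/-- The Riemenschneider quasi-determinantal equation
`E_{ij} = x_i x_j - x_{i+1} (∏_{n=i+1}^{j-1} x_n^{c_n - 2}) x_{j-1}`
of the affine toric surface determined by the integers `c`. -/
noncomputable def E (K : Type*) [Field K] (c : ℕ → ℕ) (i j : ℕ) : MvPolynomial ℕ K :=
  X i * X j - X (i + 1) * (∏ n ∈ Finset.Ico (i + 1) j, X n ^ (c n - 2)) * X (j - 1)

lemma evalE {K : Type*} [Field K] (c : ℕ → ℕ) (γ : ℕ → PowerSeries K) (i j : ℕ) :
    MvPolynomial.aeval γ (E K c i j) =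
      γ i * γ j - γ (i+1) * (∏ n ∈ Finset.Ico (i+1) j, γ n ^ (c n - 2)) * γ (j-1) := by
  simp [E]

lemma keyId {K : Type*} [Field K] (c : ℕ → ℕ) (γ : ℕ → PowerSeries K) (j h : ℕ)
    (hj : 2 ≤ j) (hjh : j + 2 ≤ h) :
    γ 1 * MvPolynomial.aeval γ (E K c j h) =
      γ j * MvPolynomial.aeval γ (E K c 1 h)
        - γ (h-1) * (∏ n ∈ Finset.Ico (j+1) h, γ n ^ (c n - 2))
          * MvPolynomial.aeval γ (E K c 1 (j+1)) := by
  rw [evalE, evalE, evalE]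
  have hsplit : (∏ n ∈ Finset.Ico (1+1) h, γ n ^ (c n - 2)) =
      (∏ n ∈ Finset.Ico (1+1) (j+1), γ n ^ (c n - 2)) *
        ∏ n ∈ Finset.Ico (j+1) h, γ n ^ (c n - 2) :=
    (Finset.prod_Ico_consecutive _ (by omega) (by omega)).symm
  simp only [hsplit, Nat.add_sub_cancel]
  ring

lemma order_neg' {K : Type*} [Field K] (f : PowerSeries K) : (-f).order = f.order := by
  have key : ∀ g : PowerSeries K, g.order ≤ (-g).order := fun g =>
    PowerSeries.le_order _ _ fun i hi => by
      rw [map_neg, PowerSeries.coeff_of_lt_order i hi, neg_zero]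
  exact le_antisymm (by simpa using key (-f)) (key f)

/-- Proof of Proposition 4.7 (2): if `ord(γ_j) ≥ s` for all `j`, `ord(γ_1) = s`, and the
equations `E_{1,j}` for `3 ≤ j ≤ e` vanish mod `t^{m+1}`, then all the equations `E_{jh}`
with `2 ≤ j < h-1 ≤ e-1`, and hence all the equations with `1 ≤ j < h-1 ≤ e-1`,
vanish mod `t^{m+1}`. -/
theorem all_equations_of_first_row (K : Type*) [Field K] (e : ℕ) (he : 4 ≤ e)
    (c : ℕ → ℕ) (hc : ∀ i, 2 ≤ i → i + 1 ≤ e → 2 ≤ c i)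
    (m s : ℕ) (hs : 1 ≤ s) (hm : 2 * s - 1 ≤ m)
    (γ : ℕ → PowerSeries K)
    (hord : ∀ j : ℕ, 1 ≤ j → j ≤ e → ((s : ℕ) : ℕ∞) ≤ (γ j).order)
    (hγ1 : (γ 1).order = (s : ℕ∞))
    (hE1 : ∀ j : ℕ, 3 ≤ j → j ≤ e →
      ((m + 1 : ℕ) : ℕ∞) ≤ (MvPolynomial.aeval γ (E K c 1 j)).order) :
    (∀ j h : ℕ, 2 ≤ j → j + 2 ≤ h → h ≤ e →
      ((m + 1 : ℕ) : ℕ∞) ≤ (MvPolynomial.aeval γ (E K c j h)).order) ∧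
    (∀ j h : ℕ, 1 ≤ j → j + 2 ≤ h → h ≤ e →
      ((m + 1 : ℕ) : ℕ∞) ≤ (MvPolynomial.aeval γ (E K c j h)).order) := by
  have main : ∀ j h : ℕ, 2 ≤ j → j + 2 ≤ h → h ≤ e →
      ((m + 1 : ℕ) : ℕ∞) ≤ (MvPolynomial.aeval γ (E K c j h)).order := by
    intro j h hj hjh hhe
    set A := MvPolynomial.aeval γ (E K c j h) with hA
    -- order of γ 1 * A is at least s + (m+1)
    have hX : ((s : ℕ) : ℕ∞) + ((m + 1 : ℕ) : ℕ∞) ≤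
        (γ j * MvPolynomial.aeval γ (E K c 1 h)).order := by
      refine le_trans ?_ (PowerSeries.le_order_mul _ _)
      exact add_le_add (hord j (by omega) (by omega)) (hE1 h (by omega) hhe)
    have hY : ((s : ℕ) : ℕ∞) + ((m + 1 : ℕ) : ℕ∞) ≤
        (γ (h-1) * (∏ n ∈ Finset.Ico (j+1) h, γ n ^ (c n - 2))
          * MvPolynomial.aeval γ (E K c 1 (j+1))).order := by
      refine le_trans ?_ (PowerSeries.le_order_mul _ _)
      refine add_le_add (le_trans ?_ (PowerSeries.le_order_mul _ _))
        (hE1 (j+1) (by omega) (by omega))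
      calc ((s : ℕ) : ℕ∞) ≤ (γ (h-1)).order := hord (h-1) (by omega) (by omega)
        _ ≤ (γ (h-1)).order + _ := le_self_add
    have hmulord : ((s : ℕ) : ℕ∞) + ((m + 1 : ℕ) : ℕ∞) ≤ (γ 1 * A).order := by
      rw [keyId c γ j h hj hjh, sub_eq_add_neg]
      refine le_trans ?_ (PowerSeries.min_order_le_order_add _ _)
      rw [order_neg']
      exact le_min hX hY
    rw [PowerSeries.order_mul, hγ1] at hmulord
    rwa [ENat.add_le_add_iff_left (by simp : ((s : ℕ) : ℕ∞) ≠ ⊤)] at hmulord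
  refine ⟨main, fun j h hj hjh hhe => ?_⟩
  rcases Nat.lt_or_ge j 2 with hj2 | hj2
  · have hj1 : j = 1 := by omega
    subst hj1
    exact hE1 h (by omega) hhe
  · exact main j h hj2 hjh hhe
end

section
/- Suppose not all of c_2,…,c_{e−1} are equal to 2, and let c_{i_1},…,c_{i_h} (h ≥ 1) be the list of those c_i that are different from 2. For an integer c ≥ 2 and integers m, s ≥ 1, define N_c^s(m) := sc − (2s−1) if cs ≤ m, and N_c^s(m) := m − (2s−2) if cs > m. Then for every m ≥ 1, the number N(m) of equivalence classes of T(m) under ~ equals Σ_{s=1}^{⌊(m+1)/2⌋} ( N_{c_{i_1}}^s(m) + Σ_{k=2}^{h} (N_{c_{i_k}}^s(m) − 1) ). -/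
/-- `m_i^s := min((c_i - 1)s, (m+1) - s)`. -/
def mIS (c : ℤ → ℤ) (m s i : ℤ) : ℤ := min ((c i - 1) * s) ((m + 1) - s)

/-- The index set `T(m) = {(i,s,l) : 2 ≤ i ≤ e-1, 1 ≤ s, 2s-1 ≤ m, s ≤ l ≤ m_i^s}` of the
irreducible components of the fiber over the singular point of the `m`-th jet scheme
(Theorem 4.11). -/
def Tset (c : ℤ → ℤ) (e m : ℤ) : Set (ℤ × ℤ × ℤ) :=
  {x | 2 ≤ x.1 ∧ x.1 ≤ e - 1 ∧ 1 ≤ x.2.1 ∧ 2 * x.2.1 - 1 ≤ m ∧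
    x.2.1 ≤ x.2.2 ∧ x.2.2 ≤ mIS c m x.2.1 x.1}

/-- The generating relation of the identifications `(i,s,s) ~ (i+1, s, m_{i+1}^s)`
for `2 ≤ i ≤ e-2`. -/
def genRel (c : ℤ → ℤ) (e m : ℤ) (a b : Tset c e m) : Prop :=
  ∃ i s : ℤ, 2 ≤ i ∧ i ≤ e - 2 ∧ (a : ℤ × ℤ × ℤ) = (i, s, s) ∧
    (b : ℤ × ℤ × ℤ) = (i + 1, s, mIS c m s (i + 1))

/-- `N(m)`: the number of equivalence classes of `T(m)` under the equivalence relation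
generated by `genRel`, i.e. the number of irreducible components of the fiber over the
singular point of the `m`-th jet scheme. -/
noncomputable def Ncount (c : ℤ → ℤ) (e m : ℤ) : ℕ := Nat.card (Quot (genRel c e m))

/-- `N_c^s(m) := sc - (2s-1)` if `cs ≤ m`, and `m - (2s-2)` if `cs > m`. -/
def Nval (cc s m : ℤ) : ℤ := if cc * s ≤ m then s * cc - (2 * s - 1) else m - (2 * s - 2)

/-! ### Auxiliary definitions -/

/-- One step along the generating relation: `(i,s,s) ↦ (i+1, s, m_{i+1}^s)`. -/
def stepF (c : ℤ → ℤ) (m : ℤ) (x : ℤ × ℤ × ℤ) : ℤ × ℤ × ℤ :=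
  (x.1 + 1, x.2.1, mIS c m x.2.1 (x.1 + 1))

/-- Normal form: keep stepping while `l = s` and `i ≤ e-2`, with fuel `n`. -/
def normF (c : ℤ → ℤ) (e m : ℤ) : ℕ → ℤ × ℤ × ℤ → ℤ × ℤ × ℤ
  | 0, x => x
  | n+1, x => if x.2.2 = x.2.1 ∧ x.1 ≤ e - 2 then normF c e m n (stepF c m x) else x

/-- The set of canonical representatives. -/
def Tset' (c : ℤ → ℤ) (e m : ℤ) : Set (ℤ × ℤ × ℤ) :=
  {x | x ∈ Tset c e m ∧ (x.2.2 = x.2.1 → ¬ x.1 ≤ e - 2)}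

/-- Finset version of `Tset'`. -/
noncomputable def Tfin (c : ℤ → ℤ) (e m : ℤ) : Finset (ℤ × ℤ × ℤ) :=
  ((Finset.Icc 2 (e-1)) ×ˢ (Finset.Icc 1 ((m+1)/2)) ×ˢ (Finset.Icc 1 m)).filter
    (fun x => x.2.1 ≤ x.2.2 ∧ x.2.2 ≤ mIS c m x.2.1 x.1 ∧ (x.2.2 = x.2.1 → ¬ x.1 ≤ e - 2))

section aux
variable {c : ℤ → ℤ} {e m : ℤ}

lemma mem_Tset_iff {x : ℤ × ℤ × ℤ} : x ∈ Tset c e m ↔ 2 ≤ x.1 ∧ x.1 ≤ e - 1 ∧ 1 ≤ x.2.1 ∧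
    2 * x.2.1 - 1 ≤ m ∧ x.2.1 ≤ x.2.2 ∧ x.2.2 ≤ mIS c m x.2.1 x.1 := Iff.rfl

lemma mem_Tset'_iff {x : ℤ × ℤ × ℤ} : x ∈ Tset' c e m ↔
    x ∈ Tset c e m ∧ (x.2.2 = x.2.1 → ¬ x.1 ≤ e - 2) := Iff.rfl

lemma s_le_mIS (hc : ∀ i, 2 ≤ i → i ≤ e - 1 → 2 ≤ c i) {i s : ℤ}
    (hi1 : 2 ≤ i) (hi2 : i ≤ e - 1) (hs : 1 ≤ s) (hsm : 2 * s ≤ m + 1) :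
    s ≤ mIS c m s i := by
  have h2 := hc i hi1 hi2
  have h3 : 1 * s ≤ (c i - 1) * s := mul_le_mul_of_nonneg_right (by omega) (by omega)
  rw [mIS, le_min_iff]
  exact ⟨by linarith, by omega⟩

lemma stepF_mem (hc : ∀ i, 2 ≤ i → i ≤ e - 1 → 2 ≤ c i) {x : ℤ × ℤ × ℤ}
    (hx : x ∈ Tset c e m) (h7 : x.1 ≤ e - 2) : stepF c m x ∈ Tset c e m := by
  obtain ⟨h1, h2, h3, h4, h5, h6⟩ := hx
  have hs := s_le_mIS (m := m) hc (i := x.1 + 1) (by omega) (by omega) h3 (by omega)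
  exact mem_Tset_iff.mpr ⟨show (2:ℤ) ≤ x.1 + 1 by omega, show x.1 + 1 ≤ e - 1 by omega,
    h3, h4, hs, le_refl _⟩

lemma normF_stop {x : ℤ × ℤ × ℤ} (hx : ¬ (x.2.2 = x.2.1 ∧ x.1 ≤ e - 2)) :
    ∀ n, normF c e m n x = x
  | 0 => rfl
  | n+1 => by rw [normF, if_neg hx]

lemma normF_mem (hc : ∀ i, 2 ≤ i → i ≤ e - 1 → 2 ≤ c i) :
    ∀ (n : ℕ) (x : ℤ × ℤ × ℤ), x ∈ Tset c e m → (e - 1 - x.1).toNat ≤ n →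
      normF c e m n x ∈ Tset' c e m
  | 0, x, hx, hn => by
    have h2 : x.1 ≤ e - 1 := hx.2.1
    rw [normF]
    exact mem_Tset'_iff.mpr ⟨hx, fun _ => by omega⟩
  | (n+1), x, hx, hn => by
    by_cases hcond : x.2.2 = x.2.1 ∧ x.1 ≤ e - 2
    · rw [normF, if_pos hcond]
      refine normF_mem hc n _ (stepF_mem hc hx hcond.2) ?_
      show (e - 1 - (x.1 + 1)).toNat ≤ n
      omega
    · rw [normF, if_neg hcond]
      exact mem_Tset'_iff.mpr ⟨hx, fun h1 h2 => hcond ⟨h1, h2⟩⟩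

lemma normF_fuel : ∀ (n n' : ℕ) (x : ℤ × ℤ × ℤ), (e - 1 - x.1).toNat ≤ n →
    (e - 1 - x.1).toNat ≤ n' → normF c e m n x = normF c e m n' x
  | 0, n', x, h, h' => by
    have hx : ¬ (x.2.2 = x.2.1 ∧ x.1 ≤ e - 2) := by rintro ⟨-, h2⟩; omega
    rw [normF_stop hx 0, normF_stop hx n']
  | (n+1), n', x, h, h' => by
    by_cases hcond : x.2.2 = x.2.1 ∧ x.1 ≤ e - 2
    · obtain ⟨n'', rfl⟩ : ∃ k, n' = k + 1 := ⟨n' - 1, by omega⟩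
      rw [normF, normF, if_pos hcond, if_pos hcond]
      refine normF_fuel n n'' _ ?_ ?_ <;>
        · show (e - 1 - (x.1 + 1)).toNat ≤ _
          omega
    · rw [normF_stop hcond, normF_stop hcond]

lemma quot_normF (hc : ∀ i, 2 ≤ i → i ≤ e - 1 → 2 ≤ c i) :
    ∀ (n : ℕ) (a b : Tset c e m), (b : ℤ × ℤ × ℤ) = normF c e m n a.1 →
      (e - 1 - (a : ℤ × ℤ × ℤ).1).toNat ≤ n →
      Quot.mk (genRel c e m) b = Quot.mk (genRel c e m) a
  | 0, a, b, hb, hn => by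
    have : b = a := Subtype.ext (hb.trans rfl)
    rw [this]
  | (n+1), a, b, hb, hn => by
    by_cases hcond : (a : ℤ × ℤ × ℤ).2.2 = (a : ℤ × ℤ × ℤ).2.1 ∧ (a : ℤ × ℤ × ℤ).1 ≤ e - 2
    · have hstep : stepF c m a.1 ∈ Tset c e m := stepF_mem hc a.2 hcond.2
      have h1 : Quot.mk (genRel c e m) b = Quot.mk (genRel c e m) ⟨stepF c m a.1, hstep⟩ :=
        quot_normF hc n ⟨stepF c m a.1, hstep⟩ b
          (by rw [hb, normF, if_pos hcond])
          (by show (e - 1 - (a.1.1 + 1)).toNat ≤ n; omega)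
      rw [h1]
      refine (Quot.sound ?_).symm
      refine ⟨a.1.1, a.1.2.1, (mem_Tset_iff.mp a.2).1, hcond.2, ?_, rfl⟩
      exact Prod.ext rfl (Prod.ext rfl hcond.1)
    · have : b = a := Subtype.ext (by rw [hb, normF_stop hcond])
      rw [this]

end aux

section count
variable {c : ℤ → ℤ} {e m : ℤ}

lemma mIS_val {i s : ℤ} (hs : 1 ≤ s) (hsm : 2 * s ≤ m + 1) (hci : 2 ≤ c i) :
    mIS c m s i + 1 - s = Nval (c i) s m := by
  have h1 : (c i - 1) * s = c i * s - s := by ring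
  have h2 : s * c i = c i * s := mul_comm _ _
  rw [mIS, Nval, h1, h2]
  generalize c i * s = A
  split_ifs <;> omega

lemma Nval_two {s : ℤ} (hs : 1 ≤ s) (hsm : 2 * s ≤ m + 1) : Nval 2 s m = 1 := by
  rw [Nval]
  split_ifs <;> omega

lemma Tset'_eq_Tfin (hm : 1 ≤ m) : Tset' c e m = ↑(Tfin c e m) := by
  ext x
  simp only [Tset', Tset, Set.mem_setOf_eq, Tfin, Finset.coe_filter, Finset.mem_product,
    Finset.mem_Icc]
  constructor
  · rintro ⟨⟨h1, h2, h3, h4, h5, h6⟩, h7⟩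
    have h8 : mIS c m x.2.1 x.1 ≤ m + 1 - x.2.1 := min_le_right _ _
    exact ⟨⟨⟨h1, h2⟩, ⟨h3, by omega⟩, by omega, by omega⟩, h5, h6, h7⟩
  · rintro ⟨⟨⟨h1, h2⟩, ⟨h3, h4⟩, h5, h6⟩, h7, h8, h9⟩
    exact ⟨⟨h1, h2, h3, by omega, h7, h8⟩, h9⟩

lemma Tfin_card (hc : ∀ i, 2 ≤ i → i ≤ e - 1 → 2 ≤ c i) (he : 4 ≤ e) (hm : 1 ≤ m) :
    ((Tfin c e m).card : ℤ) =
      ∑ s ∈ Finset.Icc (1 : ℤ) ((m+1)/2), ∑ i ∈ Finset.Icc (2 : ℤ) (e-1),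
        (mIS c m s i + 1 - (if i ≤ e - 2 then s + 1 else s)) := by
  have hmap : ∀ x ∈ Tfin c e m, (x.2.1, x.1) ∈
      (Finset.Icc (1 : ℤ) ((m+1)/2)) ×ˢ (Finset.Icc (2 : ℤ) (e-1)) := by
    intro x hx
    simp only [Tfin, Finset.mem_filter, Finset.mem_product, Finset.mem_Icc] at hx
    simp only [Finset.mem_product, Finset.mem_Icc]
    exact ⟨hx.1.2.1, hx.1.1⟩
  rw [Finset.card_eq_sum_card_fiberwise hmap]
  push_cast
  rw [Finset.sum_product]
  refine Finset.sum_congr rfl fun s hs => Finset.sum_congr rfl fun i hi => ?_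
  simp only [Finset.mem_Icc] at hs hi
  have hsm : 2 * s ≤ m + 1 := by omega
  have hmi : s ≤ mIS c m s i := s_le_mIS hc hi.1 hi.2 hs.1 hsm
  have hmr : mIS c m s i ≤ m + 1 - s := min_le_right _ _
  have hkey : (Tfin c e m).filter (fun x => (x.2.1, x.1) = (s, i)) =
      (Finset.Icc (if i ≤ e - 2 then s + 1 else s) (mIS c m s i)).map
        ⟨fun l => (i, s, l), (Prod.mk_right_injective i).comp (Prod.mk_right_injective s)⟩ := by
    ext x
    simp only [Tfin, Finset.mem_filter, Finset.mem_product, Finset.mem_Icc, Finset.mem_map,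
      Function.Embedding.coeFn_mk, Prod.mk.injEq]
    constructor
    · rintro ⟨⟨⟨⟨hA, hB⟩, ⟨hC, hD⟩, hE, hF⟩, hG, hH, hI⟩, heq⟩
      obtain ⟨hx1, hx2⟩ := heq
      refine ⟨x.2.2, ⟨?_, hx1 ▸ hx2 ▸ hH⟩, ?_⟩
      · subst hx1 hx2
        by_cases hie : x.1 ≤ e - 2
        · rw [if_pos hie]
          have := hI
          omega
        · rw [if_neg hie]; exact hG
      · rw [← hx1, ← hx2]
    · rintro ⟨l, ⟨hl1, hl2⟩, rfl⟩
      dsimp only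
      have hge : s ≤ l := by by_cases hie : i ≤ e - 2 <;> simp [hie] at hl1 <;> omega
      refine ⟨⟨⟨hi, hs, ?_, ?_⟩, hge, hl2, ?_⟩, rfl, rfl⟩
      · omega
      · omega
      · intro hls hie
        rw [if_pos hie] at hl1
        omega
  rw [hkey, Finset.card_map, Int.card_Icc]
  have hnn : 0 ≤ mIS c m s i + 1 - (if i ≤ e - 2 then s + 1 else s) := by
    split_ifs <;> omega
  split_ifs with hif <;> omega

end count

/-- Corollary 4.14, second case. -/
theorem Ncount_of_not_all_two (e : ℤ) (he : 4 ≤ e) (c : ℤ → ℤ)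
    (hc : ∀ i, 2 ≤ i → i ≤ e - 1 → 2 ≤ c i)
    (hne : ∃ i, 2 ≤ i ∧ i ≤ e - 1 ∧ c i ≠ 2) :
    ∀ m : ℤ, 1 ≤ m →
      (Ncount c e m : ℤ) =
        ∑ s ∈ Finset.Icc (1 : ℤ) ((m + 1) / 2),
          ((∑ i ∈ (Finset.Icc (2 : ℤ) (e - 1)).filter (fun i => c i ≠ 2), Nval (c i) s m)
            - ((((Finset.Icc (2 : ℤ) (e - 1)).filter (fun i => c i ≠ 2)).card : ℤ) - 1)) := by
  intro m hm
  have hfuel : ∀ a : Tset c e m, (e - 1 - (a : ℤ × ℤ × ℤ).1).toNat ≤ e.toNat := by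
    intro a
    have h1 := (mem_Tset_iff.mp a.2).1
    omega
  -- the equivalence between the quotient and the set of canonical representatives
  have equiv : Quot (genRel c e m) ≃ (Tset' c e m) := by
    refine Equiv.mk
      (Quot.lift (fun a => (⟨normF c e m e.toNat a.1,
        normF_mem hc e.toNat a.1 a.2 (hfuel a)⟩ : Tset' c e m)) ?_)
      (fun y => Quot.mk _ ⟨y.1, (mem_Tset'_iff.mp y.2).1⟩) ?_ ?_
    · intro a b hab
      obtain ⟨i, s, hi2, hie, ha, hb⟩ := hab
      apply Subtype.ext
      show normF c e m e.toNat a.1 = normF c e m e.toNat b.1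
      obtain ⟨n, hn⟩ : ∃ n, e.toNat = n + 1 := ⟨e.toNat - 1, by omega⟩
      have hcond : (a.1).2.2 = (a.1).2.1 ∧ (a.1).1 ≤ e - 2 := by
        rw [ha]; exact ⟨rfl, hie⟩
      rw [hn, normF, if_pos hcond]
      have hstep : stepF c m a.1 = b.1 := by rw [ha, hb]; rfl
      rw [hstep]
      have hb1 : (b.1).1 = i + 1 := by rw [hb]
      refine normF_fuel n (n + 1) b.1 ?_ ?_ <;> rw [hb1] <;> omega
    · intro q
      induction q using Quot.ind with
      | _ a =>
        exact quot_normF hc e.toNat a _ rfl (hfuel a)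
    · intro y
      apply Subtype.ext
      show normF c e m e.toNat y.1 = y.1
      exact normF_stop (fun hh => (mem_Tset'_iff.mp y.2).2 hh.1 hh.2) _
  have hq : (Ncount c e m : ℤ) = ((Tfin c e m).card : ℤ) := by
    have h1 : Ncount c e m = Nat.card (Tset' c e m) := Nat.card_congr equiv
    rw [h1, Nat.card_coe_set_eq, Tset'_eq_Tfin hm, Set.ncard_coe_finset]
  rw [hq, Tfin_card hc he hm]
  refine Finset.sum_congr rfl fun s hs => ?_
  simp only [Finset.mem_Icc] at hs
  have hsm : 2 * s ≤ m + 1 := by omega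
  -- rewrite each summand as Nval minus an indicator
  have hterm : ∀ i ∈ Finset.Icc (2 : ℤ) (e - 1),
      mIS c m s i + 1 - (if i ≤ e - 2 then s + 1 else s)
        = Nval (c i) s m - (if i ≤ e - 2 then (1 : ℤ) else 0) := by
    intro i hi
    simp only [Finset.mem_Icc] at hi
    have := mIS_val (c := c) (i := i) hs.1 hsm (hc i hi.1 hi.2)
    split_ifs <;> omega
  rw [Finset.sum_congr rfl hterm, Finset.sum_sub_distrib]
  have hind : (∑ i ∈ Finset.Icc (2 : ℤ) (e - 1), (if i ≤ e - 2 then (1 : ℤ) else 0))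
      = e - 3 := by
    rw [Finset.sum_boole]
    have : (Finset.Icc (2 : ℤ) (e - 1)).filter (fun i => i ≤ e - 2)
        = Finset.Icc (2 : ℤ) (e - 2) := by
      ext i
      simp only [Finset.mem_filter, Finset.mem_Icc]
      omega
    rw [this, Int.card_Icc]
    omega
  have hsplit : (∑ i ∈ Finset.Icc (2 : ℤ) (e - 1), Nval (c i) s m)
      = (∑ i ∈ (Finset.Icc (2 : ℤ) (e - 1)).filter (fun i => c i ≠ 2), Nval (c i) s m)
        + ((e - 2) - (((Finset.Icc (2 : ℤ) (e - 1)).filter (fun i => c i ≠ 2)).card : ℤ)) := by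
    rw [← Finset.sum_filter_add_sum_filter_not (Finset.Icc (2 : ℤ) (e - 1))
      (fun i => c i ≠ 2) (fun i => Nval (c i) s m)]
    congr 1
    have h2 : ∀ i ∈ (Finset.Icc (2 : ℤ) (e - 1)).filter (fun i => ¬ c i ≠ 2),
        Nval (c i) s m = 1 := by
      intro i hi
      simp only [Finset.mem_filter, not_not] at hi
      rw [hi.2]
      exact Nval_two hs.1 hsm
    rw [Finset.sum_congr rfl h2, Finset.sum_const, nsmul_eq_mul, mul_one]
    have h3 := Finset.card_filter_add_card_filter_not
      (s := Finset.Icc (2 : ℤ) (e - 1)) (p := fun i => c i ≠ 2)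
    have h4 : (Finset.Icc (2 : ℤ) (e - 1)).card = (e - 2).toNat := by
      rw [Int.card_Icc]; congr 1; omega
    omega
  rw [hind, hsplit]
  ring
end
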